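/- arXiv:1404.6572 — 3 statements merged into one kernel-verified Lean document; each statement's English description precedes it below -/
import Mathlib

section
/- Let X = (X_1,...,X_N) be an exchangeable vector of {0,1}-valued random variables and γ = X_1 + ... + X_N. Then γ has a Binomial(N, π) distribution for some π ∈ [0,1] if and only if X_1,...,X_N are jointly independent. -/
open Finset

/-- number of 1's (trues) in a 0-1 vector -/
def cnt {n : ℕ} (x : Fin n → Bool) : ℕ := (Finset.univ.filter fun i => x i = true).card

/-- P(γ = k): probability that the total count of 1's equals k -/
def gam (N : ℕ) (p : (Fin N → Bool) → ℝ) (k : ℕ) : ℝ :=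
  ∑ y : Fin N → Bool, if cnt y = k then p y else 0

/-- P(X_1 = x_1, ..., X_n = x_n): probability of observing the prefix x -/
def pref (N : ℕ) (p : (Fin N → Bool) → ℝ) {n : ℕ} (hn : n ≤ N) (x : Fin n → Bool) : ℝ :=
  ∑ y : Fin N → Bool, if (∀ i : Fin n, y (Fin.castLE hn i) = x i) then p y else 0

lemma cnt_le {n : ℕ} (x : Fin n → Bool) : cnt x ≤ n := by
  simpa [cnt] using (Finset.card_filter_le univ fun i => x i = true)

lemma factorize (N : ℕ) (g : Fin N → Bool → ℝ) :
    ∑ y : Fin N → Bool, ∏ i, g i (y i) = ∏ i, ∑ b : Bool, g i b := by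
  rw [Finset.prod_univ_sum]
  rw [Fintype.piFinset_univ]

lemma prod_pow_cnt (N : ℕ) (a : ℝ) (x : Fin N → Bool) :
    (∏ i, (if x i = true then a else 1 - a)) = a ^ cnt x * (1 - a) ^ (N - cnt x) := by
  rw [Finset.prod_ite]
  have h := Finset.card_filter_add_card_filter_not (s := (univ : Finset (Fin N)))
    (p := fun i => x i = true)
  simp only [Finset.card_univ, Fintype.card_fin] at h
  simp only [Finset.prod_const, cnt]
  congr 2
  omega

lemma exists_perm {N : ℕ} {x y : Fin N → Bool} (h : cnt x = cnt y) :
    ∃ σ : Equiv.Perm (Fin N), x ∘ σ = y := by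
  classical
  set S := univ.filter fun i => y i = true with hS
  set T := univ.filter fun i => x i = true with hT
  have hcard : S.card = T.card := h.symm
  have hcardc : Sᶜ.card = Tᶜ.card := by
    simp [Finset.card_compl, hcard]
  let e : {i // i ∈ S} ≃ {i // i ∈ T} := S.equivOfCardEq (t := T) hcard
  let e' : {i // ¬ i ∈ S} ≃ {i // ¬ i ∈ T} := by
    refine (Equiv.subtypeEquivRight ?_).trans ((Sᶜ.equivOfCardEq (t := Tᶜ) hcardc).trans
      (Equiv.subtypeEquivRight ?_)) <;> intro i <;> simp [Finset.mem_compl]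
  refine ⟨Equiv.subtypeCongr e e', funext fun i => ?_⟩
  have hx : ∀ j, j ∈ T ↔ x j = true := by intro j; simp [hT]
  have hy : ∀ j, j ∈ S ↔ y j = true := by intro j; simp [hS]
  by_cases hi : i ∈ S
  · have hσ : Equiv.subtypeCongr e e' i = e ⟨i, hi⟩ := by
      simp [Equiv.subtypeCongr, Equiv.sumCompl_symm_apply_of_pos (p := fun j => j ∈ S) hi]
    have hT' : (e ⟨i, hi⟩ : Fin N) ∈ T := (e ⟨i, hi⟩).2
    simp only [Function.comp_apply, hσ]
    rw [(hx _).1 hT', (hy i).1 hi]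
  · have hσ : Equiv.subtypeCongr e e' i = e' ⟨i, hi⟩ := by
      simp [Equiv.subtypeCongr, Equiv.sumCompl_symm_apply_of_neg (p := fun j => j ∈ S) hi]
    have hT' : ¬ (e' ⟨i, hi⟩ : Fin N) ∈ T := (e' ⟨i, hi⟩).2
    simp only [Function.comp_apply, hσ]
    have h1 : x (e' ⟨i, hi⟩) = false := by
      rcases Bool.eq_false_or_eq_true (x (e' ⟨i, hi⟩)) with h' | h'
      · exact absurd ((hx _).2 h') hT'
      · exact h'
    have h2 : y i = false := by
      rcases Bool.eq_false_or_eq_true (y i) with h' | h'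
      · exact absurd ((hy _).2 h') hi
      · exact h'
    rw [h1, h2]

lemma class_card (N k : ℕ) :
    (univ.filter fun y : Fin N → Bool => cnt y = k).card = N.choose k := by
  classical
  have : (univ.filter fun y : Fin N → Bool => cnt y = k).card
      = (Finset.powersetCard k (univ : Finset (Fin N))).card := by
    apply Finset.card_bij' (fun y _ => univ.filter fun i => y i = true)
      (fun s _ => fun i => decide (i ∈ s))
    case hi =>
      intro y hy
      simp only [Finset.mem_filter, Finset.mem_univ, true_and] at hy
      simp [Finset.mem_powersetCard, ← hy, cnt]
    case hj =>
      intro s hs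
      simp only [Finset.mem_powersetCard] at hs
      simp only [Finset.mem_filter, Finset.mem_univ, true_and]
      simp only [cnt]
      rw [← hs.2]
      congr 1
      ext i; simp
    case left_inv =>
      intro y hy
      funext i
      simp
    case right_inv =>
      intro s hs
      ext i; simp
  rw [this, Finset.card_powersetCard, Finset.card_univ, Fintype.card_fin]

lemma gam_eq {N : ℕ} (p : (Fin N → Bool) → ℝ)
    (hexch : ∀ σ : Equiv.Perm (Fin N), ∀ y : Fin N → Bool, p (y ∘ σ) = p y)
    (x : Fin N → Bool) :
    gam N p (cnt x) = (N.choose (cnt x) : ℝ) * p x := by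
  unfold gam
  rw [← Finset.sum_filter]
  rw [Finset.sum_congr rfl (g := fun _ => p x) (fun z hz => by
    simp only [Finset.mem_filter] at hz
    obtain ⟨σ, hσ⟩ := exists_perm (x := x) (y := z) hz.2.symm
    rw [← hσ]; exact hexch σ x)]
  rw [Finset.sum_const, class_card, nsmul_eq_mul]

/-- For an exchangeable 0-1 vector, γ is Binomial(N,π) for some π ∈ [0,1]
iff the coordinates are jointly independent. -/
theorem binomial_iff_independent (N : ℕ) (p : (Fin N → Bool) → ℝ)
    (hnn : ∀ y, 0 ≤ p y) (hsum : ∑ y, p y = 1)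
    (hexch : ∀ σ : Equiv.Perm (Fin N), ∀ y : Fin N → Bool, p (y ∘ σ) = p y) :
    (∃ π : ℝ, π ∈ Set.Icc (0:ℝ) 1 ∧
      ∀ k ≤ N, gam N p k = (N.choose k : ℝ) * π ^ k * (1 - π) ^ (N - k)) ↔
    (∀ x : Fin N → Bool,
      p x = ∏ i, ∑ y : Fin N → Bool, if y i = x i then p y else 0) := by
  constructor
  · rintro ⟨π, hπ, hbin⟩ x
    -- every point has product-form probability
    have hall : ∀ y : Fin N → Bool, p y = π ^ cnt y * (1 - π) ^ (N - cnt y) := by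
      intro y
      have hk : cnt y ≤ N := cnt_le y
      have h1 := gam_eq p hexch y
      rw [hbin (cnt y) hk] at h1
      have hc : (0 : ℝ) < (N.choose (cnt y) : ℝ) := by
        exact_mod_cast Nat.choose_pos hk
      have := h1.symm
      rw [mul_assoc] at this
      exact mul_left_cancel₀ (ne_of_gt hc) this
    -- marginals
    set f : Bool → ℝ := fun c => if c = true then π else 1 - π with hf
    have hm : ∀ (i : Fin N) (b : Bool),
        (∑ y : Fin N → Bool, if y i = b then p y else 0) = f b := by
      intro i b
      classical
      have hrw : ∀ y : Fin N → Bool,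
          (if y i = b then p y else 0)
            = ∏ j, (if j = i then (if y j = b then f (y j) else 0) else f (y j)) := by
        intro y
        by_cases h : y i = b
        · rw [if_pos h, hall y, ← prod_pow_cnt]
          apply Finset.prod_congr rfl
          intro j _
          by_cases hj : j = i
          · subst hj; rw [if_pos rfl, if_pos h]
          · rw [if_neg hj]
        · rw [if_neg h]
          refine (Finset.prod_eq_zero (Finset.mem_univ i) ?_).symm
          rw [if_pos rfl, if_neg h]
      rw [Finset.sum_congr rfl (fun y _ => hrw y)]
      have key := factorize N (fun j c => if j = i then (if c = b then f c else 0) else f c)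
      rw [key]
      have h2 : ∀ j : Fin N,
          (∑ c : Bool, if j = i then (if c = b then f c else 0) else f c)
            = if j = i then f b else 1 := by
        intro j
        by_cases hj : j = i
        · subst hj
          simp only [if_pos rfl]
          cases b <;> simp
        · simp only [if_neg hj]
          simp [hf]
      rw [Finset.prod_congr rfl (fun j _ => h2 j)]
      simp
    rw [Finset.prod_congr rfl (fun i _ => hm i (x i))]
    rw [hall x, ← prod_pow_cnt]
  · intro hind
    rcases Nat.eq_zero_or_pos N with hN | hN
    · subst hN
      refine ⟨0, ⟨le_refl _, zero_le_one⟩, ?_⟩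
      intro k hk
      have hk0 : k = 0 := Nat.le_zero.mp hk
      subst hk0
      have hcnt : ∀ y : Fin 0 → Bool, cnt y = 0 := by
        intro y; simp [cnt]
      simp only [gam, hcnt, if_pos rfl]
      simpa using hsum
    · set i₀ : Fin N := ⟨0, hN⟩
      classical
      set π := ∑ y : Fin N → Bool, if y i₀ = true then p y else 0 with hπdef
      have hmi : ∀ (i : Fin N) (b : Bool),
          (∑ y : Fin N → Bool, if y i = b then p y else 0)
            = ∑ y : Fin N → Bool, if y i₀ = b then p y else 0 := by
        intro i b
        refine Fintype.sum_equiv (Equiv.arrowCongr (Equiv.swap i i₀) (Equiv.refl Bool)) _ _ ?_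
        intro y
        have hE : (Equiv.arrowCongr (Equiv.swap i i₀) (Equiv.refl Bool)) y
            = y ∘ (Equiv.swap i i₀) := by
          funext j
          simp [Equiv.arrowCongr, Equiv.symm_swap]
        rw [hE]
        have h1 : (y ∘ (Equiv.swap i i₀)) i₀ = y i := by
          simp [Equiv.swap_apply_right]
        rw [h1, hexch (Equiv.swap i i₀) y]
      have hsum1 : ∀ i : Fin N,
          (∑ y : Fin N → Bool, if y i = true then p y else 0)
            + (∑ y : Fin N → Bool, if y i = false then p y else 0) = 1 := by
        intro i
        rw [← Finset.sum_add_distrib, ← hsum]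
        apply Finset.sum_congr rfl
        intro y _
        cases h : y i <;> simp [h]
      have hmval : ∀ (i : Fin N) (b : Bool),
          (∑ y : Fin N → Bool, if y i = b then p y else 0)
            = if b = true then π else 1 - π := by
        intro i b
        cases b
        · rw [hmi i false]
          have := hsum1 i₀
          rw [hmi i₀ true, hmi i₀ false] at this
          simp only [if_neg (Bool.false_ne_true)]
          linarith [this]
        · rw [hmi i true]; simp [hπdef]
      have hp : ∀ y : Fin N → Bool, p y = π ^ cnt y * (1 - π) ^ (N - cnt y) := by
        intro y
        rw [hind y, ← prod_pow_cnt]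
        apply Finset.prod_congr rfl
        intro i _
        rw [hmval i (y i)]
      refine ⟨π, ⟨?_, ?_⟩, ?_⟩
      · apply Finset.sum_nonneg
        intro y _
        split
        · exact hnn y
        · exact le_rfl
      · have : π ≤ ∑ y, p y := by
          apply Finset.sum_le_sum
          intro y _
          split
          · exact le_rfl
          · exact hnn y
        rw [hsum] at this
        exact this
      · intro k hk
        unfold gam
        rw [← Finset.sum_filter]
        rw [Finset.sum_congr rfl (g := fun _ => π ^ k * (1 - π) ^ (N - k)) (fun y hy => by
          simp only [Finset.mem_filter] at hy
          rw [hp y, hy.2])]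
        rw [Finset.sum_const, class_card, nsmul_eq_mul, mul_assoc]
end

section
/- Let X = (X_1,...,X_N) be an exchangeable vector of {0,1}-valued random variables with γ = X_1 + ... + X_N. Indifferent belief holds (i.e., there exists π ∈ [0,1] such that for every n < N and every x ∈ {0,1}^n with positive probability, P(X_{n+1}=1 | X_1=x_1,...,X_n=x_n) = π) if and only if γ ∼ Binomial(N, π) for some π ∈ [0,1]. -/
open Finset

lemma cnt_sum {n : ℕ} (x : Fin n → Bool) :
    cnt x = ∑ i : Fin n, (if x i = true then 1 else 0) := by
  classical
  unfold cnt
  rw [Finset.card_filter]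

lemma cnt_snoc_true {n : ℕ} (x : Fin n → Bool) :
    cnt (Fin.snoc x true : Fin (n + 1) → Bool) = cnt x + 1 := by
  classical
  rw [cnt_sum, cnt_sum, Fin.sum_univ_castSucc]
  simp

lemma cnt_snoc_false {n : ℕ} (x : Fin n → Bool) :
    cnt (Fin.snoc x false : Fin (n + 1) → Bool) = cnt x := by
  classical
  rw [cnt_sum, cnt_sum, Fin.sum_univ_castSucc]
  simp

lemma pref_nonneg (N : ℕ) (p : (Fin N → Bool) → ℝ) (hnn : ∀ y, 0 ≤ p y)
    {n : ℕ} (hn : n ≤ N) (x : Fin n → Bool) : 0 ≤ pref N p hn x := by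
  classical
  refine Finset.sum_nonneg fun y _ => ?_
  split <;> simp [hnn]

lemma pref_zero (N : ℕ) (p : (Fin N → Bool) → ℝ) (hsum : ∑ y, p y = 1)
    (x : Fin 0 → Bool) : pref N p (Nat.zero_le N) x = 1 := by
  classical
  unfold pref
  rw [Finset.sum_congr rfl fun y _ => if_pos (fun i => i.elim0)]
  exact hsum

lemma pref_full (N : ℕ) (p : (Fin N → Bool) → ℝ) (x : Fin N → Bool) :
    pref N p le_rfl x = p x := by
  classical
  have h : ∀ y : Fin N → Bool,
      (∀ i : Fin N, y (Fin.castLE le_rfl i) = x i) ↔ y = x := by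
    intro y
    constructor
    · intro H; funext i; simpa using H i
    · rintro rfl i; rfl
  unfold pref
  simp only [h]
  simp

lemma ext_snoc_iff {N n : ℕ} (hn : n < N) (y : Fin N → Bool) (x : Fin n → Bool) (b : Bool) :
    (∀ i : Fin (n + 1), y (Fin.castLE hn i) = (Fin.snoc x b : Fin (n + 1) → Bool) i) ↔
      ((∀ i : Fin n, y (Fin.castLE hn.le i) = x i) ∧ y ⟨n, hn⟩ = b) := by
  constructor
  · intro H
    constructor
    · intro j
      have h := H j.castSucc
      rw [Fin.snoc_castSucc] at h
      convert h using 2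
      ext; simp
    · have h := H (Fin.last n)
      rw [Fin.snoc_last] at h
      convert h using 2
      ext; simp
  · rintro ⟨H1, H2⟩ i
    refine Fin.lastCases ?_ ?_ i
    · rw [Fin.snoc_last]
      convert H2 using 2
      ext; simp
    · intro j
      rw [Fin.snoc_castSucc]
      convert H1 j using 2
      ext; simp

lemma pref_split (N : ℕ) (p : (Fin N → Bool) → ℝ) {n : ℕ} (hn : n < N) (x : Fin n → Bool) :
    pref N p hn.le x = pref N p hn (Fin.snoc x true) + pref N p hn (Fin.snoc x false) := by
  classical
  unfold pref
  rw [← Finset.sum_add_distrib]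
  refine Finset.sum_congr rfl fun y _ => ?_
  have h1 := ext_snoc_iff hn y x true
  have h0 := ext_snoc_iff hn y x false
  simp only [h1, h0]
  by_cases hA : ∀ i : Fin n, y (Fin.castLE hn.le i) = x i
  · cases hb : y ⟨n, hn⟩ <;> simp [hA, hb]
  · simp [hA]

lemma card_cnt_eq (N k : ℕ) :
    (Finset.univ.filter fun y : Fin N → Bool => cnt y = k).card = N.choose k := by
  classical
  have h : (Finset.univ.filter fun y : Fin N → Bool => cnt y = k).card
      = ((Finset.univ : Finset (Fin N)).powersetCard k).card := by
    refine Finset.card_bij (fun y _ => Finset.univ.filter fun i => y i = true) ?_ ?_ ?_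
    · intro y hy
      rw [Finset.mem_filter] at hy
      rw [Finset.mem_powersetCard]
      exact ⟨Finset.subset_univ _, hy.2⟩
    · intro y hy y' hy' hEq
      funext i
      have hEq' : (Finset.univ.filter fun j => y j = true)
          = Finset.univ.filter fun j => y' j = true := hEq
      have h2 : (i ∈ Finset.univ.filter fun j => y j = true) ↔
          (i ∈ Finset.univ.filter fun j => y' j = true) := by rw [hEq']
      simp only [Finset.mem_filter, Finset.mem_univ, true_and] at h2
      cases hyi : y i <;> cases hyi' : y' i <;> simp_all
    · intro s hs
      rw [Finset.mem_powersetCard] at hs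
      refine ⟨fun i => decide (i ∈ s), ?_, ?_⟩
      · rw [Finset.mem_filter]
        refine ⟨Finset.mem_univ _, ?_⟩
        rw [show cnt (fun i => decide (i ∈ s)) = s.card from ?_]
        · exact hs.2
        · unfold cnt
          congr 1
          ext i
          simp
      · ext i
        simp
  rw [h, Finset.card_powersetCard, Finset.card_univ, Fintype.card_fin]

lemma p_eq_of_cnt_eq (N : ℕ) (p : (Fin N → Bool) → ℝ)
    (hexch : ∀ σ : Equiv.Perm (Fin N), ∀ y : Fin N → Bool, p (y ∘ σ) = p y)
    (y y' : Fin N → Bool) (h : cnt y = cnt y') : p y' = p y := by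
  classical
  have hcard : Fintype.card {i : Fin N // y' i = true}
      = Fintype.card {i : Fin N // y i = true} := by
    rw [Fintype.card_subtype, Fintype.card_subtype]
    exact (h.symm : cnt y' = cnt y)
  obtain ⟨e⟩ := Fintype.card_eq.mp hcard
  have key : y ∘ e.extendSubtype = y' := by
    funext i
    by_cases hi : y' i = true
    · have hm := e.extendSubtype_mem i hi
      simp only [Function.comp_apply]
      rw [hm, hi]
    · have hm := e.extendSubtype_not_mem i hi
      simp only [Function.comp_apply]
      cases hyi : y (e.extendSubtype i)
      · cases hi' : y' i
        · rfl
        · exact absurd hi' hi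
      · exact absurd hyi hm
  rw [← key, hexch]

/-- If `p` is given by the binomial i.i.d. formula, then every prefix probability is
`π^c (1-π)^(n-c)`. -/
lemma pref_formula (N : ℕ) (p : (Fin N → Bool) → ℝ) (π : ℝ)
    (hp : ∀ y, p y = π ^ cnt y * (1 - π) ^ (N - cnt y)) :
    ∀ m n (hn : n ≤ N), N - n = m → ∀ x : Fin n → Bool,
      pref N p hn x = π ^ cnt x * (1 - π) ^ (n - cnt x) := by
  intro m
  induction m with
  | zero =>
    intro n hn hm x
    have hnN : n = N := by omega
    subst hnN
    have e1 : pref n p hn x = pref n p le_rfl x := rfl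
    rw [e1, pref_full]
    exact hp x
  | succ m ih =>
    intro n hn hm x
    have hlt : n < N := by omega
    have e1 : pref N p hn x = pref N p hlt.le x := rfl
    rw [e1, pref_split N p hlt x]
    have h1 := ih (n + 1) hlt (by omega) (Fin.snoc x true)
    have h0 := ih (n + 1) hlt (by omega) (Fin.snoc x false)
    rw [h1, h0, cnt_snoc_true, cnt_snoc_false]
    have hc : cnt x ≤ n := cnt_le x
    rw [show n + 1 - (cnt x + 1) = n - cnt x from by omega,
      show n + 1 - cnt x = (n - cnt x) + 1 from by omega,
      pow_succ, pow_succ]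
    ring

/-- Indifferent belief holds iff γ is Binomial(N,π) for some π ∈ [0,1]. -/
theorem indifferent_iff_binomial (N : ℕ) (p : (Fin N → Bool) → ℝ)
    (hnn : ∀ y, 0 ≤ p y) (hsum : ∑ y, p y = 1)
    (hexch : ∀ σ : Equiv.Perm (Fin N), ∀ y : Fin N → Bool, p (y ∘ σ) = p y) :
    (∃ π : ℝ, π ∈ Set.Icc (0:ℝ) 1 ∧
      ∀ (n : ℕ) (hn : n < N) (x : Fin n → Bool),
        0 < pref N p hn.le x →
        pref N p hn (Fin.snoc x true) / pref N p hn.le x = π) ↔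
    (∃ π : ℝ, π ∈ Set.Icc (0:ℝ) 1 ∧
      ∀ k ≤ N, gam N p k = (N.choose k : ℝ) * π ^ k * (1 - π) ^ (N - k)) := by
  classical
  constructor
  · rintro ⟨π, hπ, H⟩
    refine ⟨π, hπ, ?_⟩
    -- all prefix probabilities follow the formula, by induction on the prefix length
    have main : ∀ n (hn : n ≤ N) (x : Fin n → Bool),
        pref N p hn x = π ^ cnt x * (1 - π) ^ (n - cnt x) := by
      intro n
      induction n with
      | zero =>
        intro hn x
        have e1 : pref N p hn x = pref N p (Nat.zero_le N) x := rfl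
        rw [e1, pref_zero N p hsum x]
        have h0 : cnt x = 0 := Nat.le_zero.mp (cnt_le x)
        simp [h0]
      | succ n ih =>
        intro hn1 x
        have hn : n < N := hn1
        obtain ⟨x', b, rfl⟩ : ∃ (x' : Fin n → Bool) (b : Bool), x = Fin.snoc x' b :=
          ⟨Fin.init x, x (Fin.last n), (Fin.snoc_init_self x).symm⟩
        have hsplit := pref_split N p hn x'
        have hIH := ih hn.le x'
        have hc : cnt x' ≤ n := cnt_le x'
        have e1 : pref N p hn1 (Fin.snoc x' b) = pref N p hn (Fin.snoc x' b) := rfl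
        rw [e1]
        rcases eq_or_lt_of_le (pref_nonneg N p hnn hn.le x') with hP | hP
        · -- prefix probability zero: both extensions have probability zero
          have hT0 : pref N p hn (Fin.snoc x' true) = 0 := by
            have a1 := pref_nonneg N p hnn hn (Fin.snoc x' true)
            have a2 := pref_nonneg N p hnn hn (Fin.snoc x' false)
            linarith
          have hF0 : pref N p hn (Fin.snoc x' false) = 0 := by
            have a1 := pref_nonneg N p hnn hn (Fin.snoc x' true)
            have a2 := pref_nonneg N p hnn hn (Fin.snoc x' false)
            linarith
          have hzero : π ^ cnt x' * (1 - π) ^ (n - cnt x') = 0 := by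
            rw [← hIH, ← hP]
          cases b
          · rw [hF0, cnt_snoc_false,
              show n + 1 - cnt x' = (n - cnt x') + 1 from by omega, pow_succ]
            linear_combination (π - 1) * hzero
          · rw [hT0, cnt_snoc_true,
              show n + 1 - (cnt x' + 1) = n - cnt x' from by omega, pow_succ]
            linear_combination (-π) * hzero
        · -- positive prefix probability: use indifference
          have hratio := H n hn x' hP
          have hT : pref N p hn (Fin.snoc x' true) = π * pref N p hn.le x' :=
            (div_eq_iff hP.ne').mp hratio
          have hF : pref N p hn (Fin.snoc x' false) = (1 - π) * pref N p hn.le x' := by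
            have : pref N p hn (Fin.snoc x' false)
                = pref N p hn.le x' - π * pref N p hn.le x' := by linarith
            rw [this]; ring
          cases b
          · rw [hF, hIH, cnt_snoc_false,
              show n + 1 - cnt x' = (n - cnt x') + 1 from by omega, pow_succ]
            ring
          · rw [hT, hIH, cnt_snoc_true,
              show n + 1 - (cnt x' + 1) = n - cnt x' from by omega, pow_succ]
            ring
    -- now compute gam
    intro k hk
    have hpy : ∀ y : Fin N → Bool, p y = π ^ cnt y * (1 - π) ^ (N - cnt y) := by
      intro y
      rw [← pref_full N p y]
      exact main N le_rfl y
    unfold gam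
    rw [← Finset.sum_filter]
    have hconst : ∑ y ∈ Finset.univ.filter (fun y => cnt y = k), p y
        = ∑ _y ∈ Finset.univ.filter (fun y : Fin N → Bool => cnt y = k),
            (π ^ k * (1 - π) ^ (N - k)) := by
      refine Finset.sum_congr rfl fun y hy => ?_
      rw [Finset.mem_filter] at hy
      rw [hpy y, hy.2]
    rw [hconst, Finset.sum_const, card_cnt_eq N k, nsmul_eq_mul]
    ring
  · rintro ⟨π, hπ, H⟩
    refine ⟨π, hπ, ?_⟩
    -- recover p from gam
    have hpy : ∀ y : Fin N → Bool, p y = π ^ cnt y * (1 - π) ^ (N - cnt y) := by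
      intro y
      have hk : cnt y ≤ N := cnt_le y
      have hgam : gam N p (cnt y) = (N.choose (cnt y) : ℝ) * p y := by
        unfold gam
        rw [← Finset.sum_filter]
        have hconst : ∑ y' ∈ Finset.univ.filter (fun y' => cnt y' = cnt y), p y'
            = ∑ _y' ∈ Finset.univ.filter (fun y' : Fin N → Bool => cnt y' = cnt y), p y := by
          refine Finset.sum_congr rfl fun y' hy' => ?_
          rw [Finset.mem_filter] at hy'
          exact p_eq_of_cnt_eq N p hexch y y' hy'.2.symm
        rw [hconst, Finset.sum_const, card_cnt_eq N (cnt y), nsmul_eq_mul]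
      have h2 := H (cnt y) hk
      rw [hgam] at h2
      have hchoose : (N.choose (cnt y) : ℝ) ≠ 0 := by
        exact_mod_cast (Nat.choose_pos hk).ne'
      exact mul_left_cancel₀ hchoose (by rw [h2]; ring)
    intro n hn x hpos
    have hT := pref_formula N p π hpy (N - (n + 1)) (n + 1) hn rfl (Fin.snoc x true)
    have hP := pref_formula N p π hpy (N - n) n hn.le rfl x
    rw [hT, hP, cnt_snoc_true,
      show n + 1 - (cnt x + 1) = n - cnt x from by omega]
    rw [hP] at hpos
    rw [pow_succ,
      show π ^ cnt x * π * (1 - π) ^ (n - cnt x)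
        = π * (π ^ cnt x * (1 - π) ^ (n - cnt x)) from by ring]
    exact mul_div_cancel_right₀ π hpos.ne'
end

section
/- For integers N, M ≥ 1 and N ≤ a ≤ M, the Hypergeometric(N+M, a, N) distribution is 2nd-order tighter than the Binomial: if P(γ=i) = C(a,i)C(N+M-a, N-i)/C(N+M, N), then P(γ=i)^2/(P(γ=i+1)P(γ=i-1)) > (i+1)(N-i+1)/(i(N-i)) for all i with all three probabilities positive, 1 ≤ i ≤ N-1. -/
/-- the Hypergeometric(N+M, a, N) distribution is 2nd-order tighter than
the Binomial. -/
theorem hypergeometric_second_order_tighter (N M a : ℕ)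
    (hN : 1 ≤ N) (hM : 1 ≤ M) (haN : N ≤ a) (haM : a ≤ M) (P : ℕ → ℝ)
    (hP : ∀ i ≤ N, P i =
      (a.choose i : ℝ) * ((N + M - a).choose (N - i) : ℝ) / ((N + M).choose N : ℝ)) :
    ∀ i : ℕ, 1 ≤ i → i ≤ N - 1 →
      0 < P (i - 1) → 0 < P i → 0 < P (i + 1) →
      P i ^ 2 / (P (i + 1) * P (i - 1)) >
        (((i + 1) * (N - i + 1) : ℕ) : ℝ) / ((i * (N - i) : ℕ) : ℝ) := by
  intro i hi1 hi2 hp0 hp1 hp2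
  set b := N + M - a with hb
  -- basic arithmetic facts
  have hiN : i + 1 ≤ N := by omega
  have hia : i + 1 ≤ a := le_trans hiN haN
  have hbN : N ≤ b := by omega
  -- choose positivity
  have hA0 : 0 < a.choose (i - 1) := Nat.choose_pos (by omega)
  have hA1 : 0 < a.choose i := Nat.choose_pos (by omega)
  have hA2 : 0 < a.choose (i + 1) := Nat.choose_pos hia
  have hB0 : 0 < b.choose (N - i - 1) := Nat.choose_pos (by omega)
  have hB1 : 0 < b.choose (N - i) := Nat.choose_pos (by omega)
  have hB2 : 0 < b.choose (N - i + 1) := Nat.choose_pos (by omega)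
  have hDn : 0 < (N + M).choose N := Nat.choose_pos (Nat.le_add_right N M)
  -- the key natural-number inequality
  have key : ((i + 1) * (N - i + 1)) *
      ((a.choose (i + 1) * b.choose (N - i - 1)) * (a.choose (i - 1) * b.choose (N - i + 1)))
      < (a.choose i * b.choose (N - i)) ^ 2 * (i * (N - i)) := by
    have h1 : a.choose (i + 1) * (i + 1) = a.choose i * (a - i) :=
      Nat.choose_succ_right_eq a i
    have h2 : a.choose i * i = a.choose (i - 1) * (a - (i - 1)) := by
      have := Nat.choose_succ_right_eq a (i - 1)
      rwa [show i - 1 + 1 = i by omega] at this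
    have h3 : b.choose (N - i + 1) * (N - i + 1) = b.choose (N - i) * (b - (N - i)) :=
      Nat.choose_succ_right_eq b (N - i)
    have h4 : b.choose (N - i) * (N - i) = b.choose (N - i - 1) * (b - (N - i - 1)) := by
      have := Nat.choose_succ_right_eq b (N - i - 1)
      rwa [show N - i - 1 + 1 = N - i by omega] at this
    have e1 : a - (i - 1) = (a - i) + 1 := by omega
    have e2 : b - (N - i - 1) = (b - (N - i)) + 1 := by omega
    have eL : ((i + 1) * (N - i + 1)) *
        ((a.choose (i + 1) * b.choose (N - i - 1)) * (a.choose (i - 1) * b.choose (N - i + 1)))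
        = (a.choose i * a.choose (i - 1) * b.choose (N - i) * b.choose (N - i - 1)) *
          ((a - i) * (b - (N - i))) := by
      calc ((i + 1) * (N - i + 1)) *
          ((a.choose (i + 1) * b.choose (N - i - 1)) * (a.choose (i - 1) * b.choose (N - i + 1)))
          = (a.choose (i + 1) * (i + 1)) * (b.choose (N - i + 1) * (N - i + 1)) *
            (a.choose (i - 1) * b.choose (N - i - 1)) := by ring
        _ = (a.choose i * (a - i)) * (b.choose (N - i) * (b - (N - i))) *
            (a.choose (i - 1) * b.choose (N - i - 1)) := by rw [h1, h3]
        _ = _ := by ring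
    have eR : (a.choose i * b.choose (N - i)) ^ 2 * (i * (N - i))
        = (a.choose i * a.choose (i - 1) * b.choose (N - i) * b.choose (N - i - 1)) *
          (((a - i) + 1) * ((b - (N - i)) + 1)) := by
      calc (a.choose i * b.choose (N - i)) ^ 2 * (i * (N - i))
          = a.choose i * b.choose (N - i) * ((a.choose i * i) * (b.choose (N - i) * (N - i))) := by
            ring
        _ = a.choose i * b.choose (N - i) *
            ((a.choose (i - 1) * (a - (i - 1))) * (b.choose (N - i - 1) * (b - (N - i - 1)))) := by
            rw [h2, h4]
        _ = _ := by rw [e1, e2]; ring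
    rw [eL, eR]
    have hc : 0 < a.choose i * a.choose (i - 1) * b.choose (N - i) * b.choose (N - i - 1) :=
      Nat.mul_pos (Nat.mul_pos (Nat.mul_pos hA1 hA0) hB1) hB0
    have hx : (a - i) * (b - (N - i)) < ((a - i) + 1) * ((b - (N - i)) + 1) := by
      have hexp : ((a - i) + 1) * ((b - (N - i)) + 1)
          = (a - i) * (b - (N - i)) + ((a - i) + (b - (N - i)) + 1) := by ring
      omega
    exact mul_lt_mul_of_pos_left hx hc
  -- move to the reals
  have hD : (0 : ℝ) < ((N + M).choose N : ℝ) := by exact_mod_cast hDn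
  rw [hP i (by omega), hP (i + 1) (by omega), hP (i - 1) (by omega)]
  rw [show N - (i - 1) = N - i + 1 by omega, show N - (i + 1) = N - i - 1 by omega]
  have hA0' : (0 : ℝ) < (a.choose (i - 1) : ℝ) := by exact_mod_cast hA0
  have hA2' : (0 : ℝ) < (a.choose (i + 1) : ℝ) := by exact_mod_cast hA2
  have hB0' : (0 : ℝ) < (b.choose (N - i - 1) : ℝ) := by exact_mod_cast hB0
  have hB2' : (0 : ℝ) < (b.choose (N - i + 1) : ℝ) := by exact_mod_cast hB2
  have he : ((a.choose i : ℝ) * (b.choose (N - i) : ℝ) / ((N + M).choose N : ℝ)) ^ 2 /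
      (((a.choose (i + 1) : ℝ) * (b.choose (N - i - 1) : ℝ) / ((N + M).choose N : ℝ)) *
        ((a.choose (i - 1) : ℝ) * (b.choose (N - i + 1) : ℝ) / ((N + M).choose N : ℝ)))
      = ((a.choose i : ℝ) * (b.choose (N - i) : ℝ)) ^ 2 /
        (((a.choose (i + 1) : ℝ) * (b.choose (N - i - 1) : ℝ)) *
          ((a.choose (i - 1) : ℝ) * (b.choose (N - i + 1) : ℝ))) := by
    field_simp
  have hden1 : (0 : ℝ) < ((i * (N - i) : ℕ) : ℝ) := by
    have : 0 < i * (N - i) := Nat.mul_pos (by omega) (by omega)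
    exact_mod_cast this
  have hden2 : (0 : ℝ) < ((a.choose (i + 1) : ℝ) * (b.choose (N - i - 1) : ℝ)) *
      ((a.choose (i - 1) : ℝ) * (b.choose (N - i + 1) : ℝ)) := by positivity
  rw [he, gt_iff_lt, div_lt_div_iff₀ hden1 hden2]
  exact_mod_cast key
end
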